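/- The limit of γ(S) = 1 + (D/(4S)) · log(1 − (D²/((D−1)(D+2))) · ((1 − √(1 − g^D))/(1 + √(1 − g^D))) · (1 − g)) with g = exp(−2S/D), as S → 0⁺, equals (D(D+2) − 4) / (2(D−1)(D+2)), and this limit lies in the interval [1/2, 5/9] for all integers D ≥ 2. -/

import Mathlib

/-- The convergence-rate function
`γ(S) = 1 + (D/(4S)) · log(1 − (D²/((D−1)(D+2))) · ((1−√(1−g^D))/(1+√(1−g^D))) · (1−g))`
with `g = exp(−2S/D)`. -/
noncomputable def gam (D : ℕ) (S : ℝ) : ℝ :=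
  1 + ((D : ℝ) / (4 * S)) * Real.log (1 -
    ((D : ℝ) ^ 2 / (((D : ℝ) - 1) * ((D : ℝ) + 2))) *
      ((1 - Real.sqrt (1 - Real.exp (-2 * S / D) ^ D)) /
        (1 + Real.sqrt (1 - Real.exp (-2 * S / D) ^ D))) *
      (1 - Real.exp (-2 * S / D)))

/-- As `S → 0⁺`, `γ(S)` tends to `(D(D+2) − 4) / (2(D−1)(D+2))`, a value lying in
`[1/2, 5/9]` for every integer `D ≥ 2`. -/
theorem gam_tendsto_limit (D : ℕ) (hD : 2 ≤ D) :
    Filter.Tendsto (gam D) (nhdsWithin 0 (Set.Ioi 0))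
        (nhds (((D : ℝ) * ((D : ℝ) + 2) - 4) / (2 * ((D : ℝ) - 1) * ((D : ℝ) + 2)))) ∧
      ((D : ℝ) * ((D : ℝ) + 2) - 4) / (2 * ((D : ℝ) - 1) * ((D : ℝ) + 2)) ∈
        Set.Icc (1 / 2 : ℝ) (5 / 9) := by
  have hd : (2:ℝ) ≤ (D:ℝ) := by exact_mod_cast hD
  set d : ℝ := (D : ℝ) with hd_def
  have hd0 : (0:ℝ) < d := by linarith
  have hd1 : (0:ℝ) < d - 1 := by linarith
  have hd2 : (0:ℝ) < d + 2 := by linarith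
  have hDne : D ≠ 0 := by omega
  -- abbreviations
  set c : ℝ := d ^ 2 / ((d - 1) * (d + 2)) with hc_def
  set r : ℝ → ℝ := fun S =>
    (1 - Real.sqrt (1 - Real.exp (-2 * S / d) ^ D)) /
      (1 + Real.sqrt (1 - Real.exp (-2 * S / d) ^ D)) with hr_def
  set u : ℝ → ℝ := fun S => c * r S * (1 - Real.exp (-2 * S / d)) with hu_def
  have hcpos : 0 < c := by
    rw [hc_def]; exact div_pos (by positivity) (mul_pos hd1 hd2)
  -- positivity facts for S > 0
  have key : ∀ S : ℝ, 0 < S → 0 < u S := by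
    intro S hS
    have hexp1 : Real.exp (-2 * S / d) < 1 := by
      apply Real.exp_lt_one_iff.mpr
      apply div_neg_of_neg_of_pos _ hd0
      linarith
    have hexp0 : 0 < Real.exp (-2 * S / d) := Real.exp_pos _
    have hpow1 : Real.exp (-2 * S / d) ^ D < 1 := pow_lt_one₀ hexp0.le hexp1 hDne
    have hpow0 : 0 < Real.exp (-2 * S / d) ^ D := pow_pos hexp0 D
    have hsq1 : Real.sqrt (1 - Real.exp (-2 * S / d) ^ D) < 1 := by
      rw [Real.sqrt_lt' one_pos]
      nlinarith
    have hsq0 : 0 ≤ Real.sqrt (1 - Real.exp (-2 * S / d) ^ D) := Real.sqrt_nonneg _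
    have hrpos : 0 < r S := by
      rw [hr_def]; exact div_pos (by linarith) (by linarith)
    exact mul_pos (mul_pos hcpos hrpos) (by linarith)
  -- continuity of r at 0, with value 1
  have hr_cont : Filter.Tendsto r (nhds 0) (nhds 1) := by
    have h1 : ContinuousAt r 0 := by
      apply ContinuousAt.div
      · fun_prop
      · fun_prop
      · norm_num
    have : r 0 = 1 := by
      rw [hr_def]; norm_num
    simpa [this] using h1.tendsto
  have hr_cont' : Filter.Tendsto r (nhdsWithin 0 (Set.Ioi 0)) (nhds 1) :=
    hr_cont.mono_left nhdsWithin_le_nhds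
  -- u tends to 0
  have hg_cont : Filter.Tendsto (fun S : ℝ => 1 - Real.exp (-2 * S / d)) (nhds 0) (nhds 0) := by
    have h1 : ContinuousAt (fun S : ℝ => 1 - Real.exp (-2 * S / d)) 0 := by fun_prop
    have : (1:ℝ) - Real.exp (-2 * 0 / d) = 0 := by norm_num
    simpa [this] using h1.tendsto
  have hu_tends : Filter.Tendsto u (nhds 0) (nhds 0) := by
    have := (tendsto_const_nhds (x := c)).mul hr_cont |>.mul hg_cont
    simpa only [mul_zero] using this
  have hu' : Filter.Tendsto u (nhdsWithin 0 (Set.Ioi 0)) (nhdsWithin 0 {x | x ≠ 0}) := by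
    rw [tendsto_nhdsWithin_iff]
    constructor
    · exact hu_tends.mono_left nhdsWithin_le_nhds
    · filter_upwards [self_mem_nhdsWithin] with S hS
      exact (key S hS).ne'
  -- log(1-x)/x → -1 as x → 0, x ≠ 0
  have hL : Filter.Tendsto (fun x : ℝ => Real.log (1 - x) / x)
      (nhdsWithin 0 {x | x ≠ 0}) (nhds (-1)) := by
    have hderiv : HasDerivAt (fun x : ℝ => Real.log (1 - x)) (-1) 0 := by
      have h1 : HasDerivAt (fun x : ℝ => 1 - x) (-1) 0 := by
        simpa using (hasDerivAt_id (0:ℝ)).const_sub 1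
      have h2 : HasDerivAt Real.log 1 ((1:ℝ) - 0) := by
        simpa using Real.hasDerivAt_log (by norm_num : (1:ℝ) - 0 ≠ 0)
      exact (h2.comp 0 h1).congr_deriv (by norm_num)
    have := hasDerivAt_iff_tendsto_slope.mp hderiv
    apply this.congr
    intro x
    simp [slope_def_field]
  have h1 : Filter.Tendsto (fun S => Real.log (1 - u S) / u S)
      (nhdsWithin 0 (Set.Ioi 0)) (nhds (-1)) := hL.comp hu'
  -- (1 - exp(-2S/d))/S → 2/d
  have hslope : Filter.Tendsto (fun S : ℝ => (1 - Real.exp (-2 * S / d)) / S)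
      (nhdsWithin 0 (Set.Ioi 0)) (nhds (2 / d)) := by
    have hderiv2 : HasDerivAt (fun S : ℝ => 1 - Real.exp (-2 * S / d)) (2 / d) 0 := by
      have h1 : HasDerivAt (fun S : ℝ => -2 * S / d) (-2 / d) 0 := by
        simpa using ((hasDerivAt_id (0:ℝ)).const_mul (-2)).div_const d
      have h3 := (h1.exp).const_sub 1
      exact h3.congr_deriv (by norm_num; ring)
    have h := hasDerivAt_iff_tendsto_slope.mp hderiv2
    have h' := h.mono_left (nhdsWithin_mono 0 (fun x hx => ne_of_gt hx))
    apply h'.congr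
    intro x
    simp [slope_def_field]
  -- u S / S → c * 1 * (2/d)
  have h2 : Filter.Tendsto (fun S => u S / S) (nhdsWithin 0 (Set.Ioi 0))
      (nhds (c * 1 * (2 / d))) := by
    have := ((tendsto_const_nhds (x := c)).mul hr_cont').mul hslope
    apply this.congr
    intro S
    simp only [hu_def]
    ring
  -- assemble
  have htot : Filter.Tendsto
      (fun S => 1 + d / 4 * (Real.log (1 - u S) / u S * (u S / S)))
      (nhdsWithin 0 (Set.Ioi 0)) (nhds (1 + d / 4 * (-1 * (c * 1 * (2 / d))))) :=
    tendsto_const_nhds.add ((h1.mul h2).const_mul (d / 4))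
  have hval : 1 + d / 4 * (-1 * (c * 1 * (2 / d))) =
      (d * (d + 2) - 4) / (2 * (d - 1) * (d + 2)) := by
    rw [hc_def]
    field_simp
    ring
  have heq : (fun S => 1 + d / 4 * (Real.log (1 - u S) / u S * (u S / S)))
      =ᶠ[nhdsWithin 0 (Set.Ioi 0)] gam D := by
    filter_upwards [self_mem_nhdsWithin] with S hS
    have huS := (key S hS).ne'
    have hSne : S ≠ 0 := ne_of_gt hS
    show 1 + d / 4 * (Real.log (1 - u S) / u S * (u S / S)) =
      1 + (d / (4 * S)) * Real.log (1 - u S)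
    field_simp
  constructor
  · rw [← hval]
    exact htot.congr' heq
  · constructor
    · rw [le_div_iff₀ (by positivity)]
      nlinarith
    · rw [div_le_iff₀ (by positivity)]
      nlinarith [sq_nonneg (d - 4)]
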